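/- On M = ℝ⁺ × ℝ, let ∇ have Christoffel symbols Γᵢⱼᵏ = (x¹)⁻¹Cᵢⱼᵏ with constants satisfying C₁₂¹ = C₂₂¹ = C₂₂² = 0 (components with upper index 2 otherwise arbitrary, C₁₁¹ ≠ -1). Then f(x¹,x²) = (x¹)^{C₁₁¹+1} satisfies H_∇ f = 0. -/

import Mathlib

/-- Partial derivative in the `i`-th coordinate direction. -/
noncomputable def pd {n : ℕ} (i : Fin n) (f : (Fin n → ℝ) → ℝ) : (Fin n → ℝ) → ℝ :=
  fun x => fderiv ℝ f x (Pi.single i 1)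

/-- Affine Hessian: `(H_∇ f)ᵢⱼ = ∂ᵢ∂ⱼ f - Γᵢⱼᵏ ∂ₖ f`. -/
noncomputable def affHess {n : ℕ} (Γ : Fin n → Fin n → Fin n → (Fin n → ℝ) → ℝ)
    (f : (Fin n → ℝ) → ℝ) (i j : Fin n) : (Fin n → ℝ) → ℝ :=
  fun x => pd i (pd j f) x - ∑ k, Γ i j k x * pd k f x

/-- Coordinate Ricci tensor
`ρⱼₖ = ∂ᵢΓⱼₖⁱ - ∂ⱼΓᵢₖⁱ + ΓᵢₗⁱΓⱼₖˡ - ΓⱼₗⁱΓᵢₖˡ` (sums over `i`, `l`). -/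
noncomputable def ricci {n : ℕ} (Γ : Fin n → Fin n → Fin n → (Fin n → ℝ) → ℝ)
    (j k : Fin n) : (Fin n → ℝ) → ℝ :=
  fun x => ∑ i, (pd i (Γ j k i) x - pd j (Γ i k i) x
    + ∑ l, (Γ i l i x * Γ j k l x - Γ j l i x * Γ i k l x))

/-- Symmetrized Ricci tensor. -/
noncomputable def ricciS {n : ℕ} (Γ : Fin n → Fin n → Fin n → (Fin n → ℝ) → ℝ)
    (j k : Fin n) : (Fin n → ℝ) → ℝ :=
  fun x => (ricci Γ j k x + ricci Γ k j x) / 2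

lemma pd_rpow (r : ℝ) (j : Fin 2) (x : Fin 2 → ℝ) (hx : 0 < x 0) :
    pd j (fun y => y 0 ^ r) x = r * x 0 ^ (r - 1) * (Pi.single j 1 : Fin 2 → ℝ) 0 := by
  have h1 : HasDerivAt (fun t : ℝ => t ^ r) (r * x 0 ^ (r - 1)) (x 0) :=
    Real.hasDerivAt_rpow_const (Or.inl hx.ne')
  have h : HasFDerivAt (fun y : Fin 2 → ℝ => y 0 ^ r)
      ((r * x 0 ^ (r - 1)) • (ContinuousLinearMap.proj 0 : (Fin 2 → ℝ) →L[ℝ] ℝ)) x :=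
    by have := h1.comp_hasFDerivAt x ((ContinuousLinearMap.proj 0 : (Fin 2 → ℝ) →L[ℝ] ℝ)).hasFDerivAt; exact this
  simp [pd, h.fderiv]

lemma mem_nhds_pos (x : Fin 2 → ℝ) (hx : 0 < x 0) : {y : Fin 2 → ℝ | 0 < y 0} ∈ nhds x :=
  (isOpen_lt continuous_const (continuous_apply 0)).mem_nhds hx

lemma pd_congr {f g : (Fin 2 → ℝ) → ℝ} {x : Fin 2 → ℝ} (i : Fin 2)
    (h : f =ᶠ[nhds x] g) : pd i f x = pd i g x := by
  simp [pd, h.fderiv_eq]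

/-- Type B surface on ℝ⁺×ℝ with Γᵢⱼᵏ = (x¹)⁻¹Cᵢⱼᵏ, C₁₂¹ = C₂₂¹ = C₂₂² = 0
and C₁₁¹ ≠ -1: the function (x¹)^{C₁₁¹+1} satisfies H_∇ f = 0 on ℝ⁺×ℝ. -/
theorem stmt15 (C : Fin 2 → Fin 2 → Fin 2 → ℝ)
    (hsym : ∀ i j k, C i j k = C j i k)
    (h2 : C 0 1 0 = 0) (h3 : C 1 1 0 = 0) (h4 : C 1 1 1 = 0)
    (h5 : C 0 0 0 ≠ -1) :
    ∀ x : Fin 2 → ℝ, 0 < x 0 → ∀ i j : Fin 2,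
      affHess (fun i j k x => C i j k / x 0)
        (fun y => y 0 ^ (C 0 0 0 + 1)) i j x = 0 :=  by
  intro x hx i j
  set r : ℝ := C 0 0 0 + 1 with hr
  have hx0 : x 0 ≠ 0 := hx.ne'
  have hpd : ∀ k : Fin 2, pd k (fun y => y 0 ^ r) x
      = r * x 0 ^ (r - 1) * (Pi.single k 1 : Fin 2 → ℝ) 0 := fun k => pd_rpow r k x hx
  have hev0 : pd 0 (fun y : Fin 2 → ℝ => y 0 ^ r) =ᶠ[nhds x] (fun y => r * y 0 ^ (r - 1)) := by
    filter_upwards [mem_nhds_pos x hx] with y hy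
    simp [pd_rpow r 0 y hy]
  have hev1 : pd 1 (fun y : Fin 2 → ℝ => y 0 ^ r) =ᶠ[nhds x] (fun _ => (0:ℝ)) := by
    filter_upwards [mem_nhds_pos x hx] with y hy
    simp [pd_rpow r 1 y hy, Pi.single_eq_of_ne (show (1:Fin 2) ≠ 0 by decide)]
  have hpd2_0 : ∀ i : Fin 2, pd i (pd 0 (fun y : Fin 2 → ℝ => y 0 ^ r)) x
      = r * ((r - 1) * x 0 ^ (r - 1 - 1) * (Pi.single i 1 : Fin 2 → ℝ) 0) := by
    intro i
    rw [pd_congr i hev0]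
    have : pd i (fun y : Fin 2 → ℝ => r * y 0 ^ (r - 1)) x
        = r * pd i (fun y : Fin 2 → ℝ => y 0 ^ (r - 1)) x := by
      simp only [pd]
      rw [fderiv_const_mul]
      · simp
      · have h1 : HasDerivAt (fun t : ℝ => t ^ (r-1)) ((r-1) * x 0 ^ (r - 1 - 1)) (x 0) :=
          Real.hasDerivAt_rpow_const (Or.inl hx0)
        exact (h1.comp_hasFDerivAt x
          ((ContinuousLinearMap.proj 0 : (Fin 2 → ℝ) →L[ℝ] ℝ)).hasFDerivAt).differentiableAt
    rw [this, pd_rpow (r-1) i x hx]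
  have hpd2_1 : ∀ i : Fin 2, pd i (pd 1 (fun y : Fin 2 → ℝ => y 0 ^ r)) x = 0 := by
    intro i
    rw [pd_congr i hev1]
    simp [pd]
  have hC : C 0 0 0 = r - 1 := by rw [hr]; ring
  have hsub : x 0 ^ (r - 1 - 1) = x 0 ^ (r - 1) / x 0 := Real.rpow_sub_one hx0 _
  fin_cases i <;> fin_cases j <;>
    simp only [affHess, Fin.sum_univ_two, Fin.mk_zero, Fin.mk_one, Fin.isValue,
      hpd2_0, hpd2_1, hpd, Pi.single_eq_same,
      Pi.single_eq_of_ne (show (0:Fin 2) ≠ 1 by decide), mul_zero, mul_one, zero_mul,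
      hsym 1 0 0, h2, h3, h4, hC, hsub, add_zero, zero_add, sub_zero, zero_sub,
      neg_eq_zero, sub_self] <;>
    field_simp <;> ring
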